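/- Let H be a simple graph on vertex set ℕ, and for n ∈ ℕ let H_n denote the subgraph of H induced on {0,…,n−1}. For a graph G admitting no homomorphism H → G, consider the set T^G_H of all homomorphisms H_n → G (n = 0, 1, 2, …) ordered by extension of functions. Then: (a) the converse extension relation (g ≺ f iff g strictly extends f) is well-founded, so the ordinal rank rk_H(G) of the empty function is well-defined; (b) if G₁ and G₂ are graphs with no homomorphism H → G₁ and no homomorphism H → G₂, and there is a homomorphism G₁ → G₂, then rk_H(G₁) ≤ rk_H(G₂). -/
import Mathlib


/-- The `H`-valued tree `T^G_H`: homomorphisms from the induced subgraphs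
`H_n` of `H` on `{0,…,n−1}` into `G`, encoded as lists `l` of vertices of `G`
of length `n` such that adjacency in `H` below `n` is sent to adjacency
in `G`. -/
def homTree {V : Type*} (H : SimpleGraph ℕ) (G : SimpleGraph V) : Type _ :=
  {l : List V // ∀ (i j : ℕ) (hi : i < l.length) (hj : j < l.length),
    H.Adj i j → G.Adj (l.get ⟨i, hi⟩) (l.get ⟨j, hj⟩)}

/-- `homExt H G g f` means that `g` strictly extends `f` in `T^G_H`. -/
def homExt {V : Type*} (H : SimpleGraph ℕ) (G : SimpleGraph V) :
    homTree H G → homTree H G → Prop :=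
  fun g f => f.1 <+: g.1 ∧ f.1 ≠ g.1

/-- The empty function as an element of `T^G_H`. -/
def homTree.nil {V : Type*} (H : SimpleGraph ℕ) (G : SimpleGraph V) :
    homTree H G :=
  ⟨[], by intro i j hi hj; simp at hi⟩

universe u

/-- Rank is monotone along relation homomorphisms. -/
theorem acc_rank_le_of_relHom {α β : Type u} {r : α → α → Prop} {s : β → β → Prop}
    (f : α → β) (hf : ∀ a b, r a b → s (f a) (f b)) :
    ∀ (a : α) (ha : Acc r a) (hb : Acc s (f a)), ha.rank ≤ hb.rank := by
  intro a ha
  induction ha with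
  | intro a h ih =>
    intro hb
    rw [Acc.rank_eq]
    refine Ordinal.iSup_le fun ⟨b, hba⟩ => ?_
    have hsb : s (f b) (f a) := hf _ _ hba
    have h1 : ((Acc.intro a h).inv hba).rank ≤ (hb.inv hsb).rank := ih b hba _
    calc Order.succ ((Acc.intro a h).inv hba).rank
        ≤ Order.succ (hb.inv hsb).rank := Order.succ_le_succ h1
      _ ≤ hb.rank := Order.succ_le_of_lt (hb.rank_lt_of_rel hsb)

/-- (a) part: well-foundedness. -/
instance homExt_isIrrefl {W : Type u} (H : SimpleGraph ℕ) (G : SimpleGraph W) :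
    IsIrrefl (homTree H G) (homExt H G) :=
  ⟨fun f hf => hf.2 rfl⟩

instance homExt_isTrans {W : Type u} (H : SimpleGraph ℕ) (G : SimpleGraph W) :
    IsTrans (homTree H G) (homExt H G) := by
  refine ⟨fun a b c hab hbc => ⟨hbc.1.trans hab.1, fun heq => ?_⟩⟩
  have h1 : c.1.length ≤ b.1.length := hbc.1.length_le
  have h2 : b.1.length ≤ a.1.length := hab.1.length_le
  have h3 : b.1.length ≠ a.1.length := fun h' => hab.2 (hab.1.eq_of_length h')
  have h4 : c.1.length ≠ b.1.length := fun h' => hbc.2 (hbc.1.eq_of_length h')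
  have : c.1.length = a.1.length := by rw [heq]
  omega

instance homExt_isStrictOrder {W : Type u} (H : SimpleGraph ℕ) (G : SimpleGraph W) :
    IsStrictOrder (homTree H G) (homExt H G) :=
  { homExt_isIrrefl H G, homExt_isTrans H G with }

theorem homExt_wellFounded {W : Type u} (H : SimpleGraph ℕ) (G : SimpleGraph W)
    (h : ¬ Nonempty (H →g G)) : WellFounded (homExt H G) := by
  rw [RelEmbedding.wellFounded_iff_isEmpty]
  constructor
  intro e
  set c : ℕ → List W := fun n => (e n).1 with hc
  have hstep : ∀ n, c n <+: c (n + 1) ∧ (c n).length < (c (n + 1)).length := by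
    intro n
    have := e.map_rel_iff.2 (Nat.lt_succ_self n)
    refine ⟨this.1, ?_⟩
    rcases this.1.length_le.lt_or_eq with h' | h'
    · exact h'
    · exact absurd (this.1.eq_of_length h') this.2
  have hpre : ∀ m n, m ≤ n → c m <+: c n := by
    intro m n hmn
    induction n with
    | zero => obtain rfl := Nat.le_zero.1 hmn; exact List.prefix_rfl
    | succ n ihn =>
      rcases eq_or_lt_of_le hmn with h' | h'
      · rw [h']
      · exact (ihn (Nat.lt_succ_iff.1 h')).trans (hstep n).1
  have hlen : ∀ n, n ≤ (c n).length := by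
    intro n
    induction n with
    | zero => exact Nat.zero_le _
    | succ n ihn => exact Nat.succ_le_of_lt (lt_of_le_of_lt ihn (hstep n).2)
  -- the limit function
  have hlt : ∀ i, i < (c (i + 1)).length := fun i => lt_of_lt_of_le (Nat.lt_succ_self i) (hlen _)
  set φ : ℕ → W := fun i => (c (i + 1)).get ⟨i, hlt i⟩ with hφ
  have hagree : ∀ (n i : ℕ) (hi : i < (c n).length), (c n).get ⟨i, hi⟩ = φ i := by
    intro n i hi
    rcases le_total n (i + 1) with h' | h'
    · have hp := hpre n (i + 1) h'
      simp only [hφ, List.get_eq_getElem]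
      exact hp.getElem hi
    · have hp := hpre (i + 1) n h'
      simp only [hφ, List.get_eq_getElem]
      exact (hp.getElem (hlt i)).symm
  refine h ⟨⟨φ, ?_⟩⟩
  intro i j hij
  have hi : i < (c (max i j + 1)).length :=
    lt_of_lt_of_le (Nat.lt_succ_of_le (le_max_left i j)) (hlen _)
  have hj : j < (c (max i j + 1)).length :=
    lt_of_lt_of_le (Nat.lt_succ_of_le (le_max_right i j)) (hlen _)
  have := (e (max i j + 1)).2 i j hi hj hij
  rwa [hagree _ i hi, hagree _ j hj] at this

/-- (a) If there is no homomorphism `H → G`, then "strictly extends" on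
`T^G_H` is well-founded, so the rank `rk_H(G)` of the empty function is
well-defined; (b) if `H ↛ G₁`, `H ↛ G₂` and `G₁ → G₂` then
`rk_H(G₁) ≤ rk_H(G₂)`. -/
theorem homTree_rank_wellDefined_and_monotone {V₁ V₂ : Type u}
    (H : SimpleGraph ℕ) (G₁ : SimpleGraph V₁) (G₂ : SimpleGraph V₂)
    (h₁ : ¬ Nonempty (H →g G₁)) (h₂ : ¬ Nonempty (H →g G₂)) :
    (∀ (W : Type u) (G : SimpleGraph W), ¬ Nonempty (H →g G) →
      WellFounded (homExt H G)) ∧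
    (∀ (wf₁ : WellFounded (homExt H G₁)) (wf₂ : WellFounded (homExt H G₂)),
      Nonempty (G₁ →g G₂) →
        (wf₁.apply (homTree.nil H G₁)).rank ≤
          (wf₂.apply (homTree.nil H G₂)).rank) := by
  constructor
  · exact fun W G h => homExt_wellFounded H G h
  · rintro wf₁ wf₂ ⟨ψ⟩
    -- the map induced by ψ
    set F : homTree H G₁ → homTree H G₂ := fun f =>
      ⟨f.1.map ψ, by
        intro i j hi hj hij
        simp only [List.length_map] at hi hj
        simp only [List.get_eq_getElem, List.getElem_map]
        exact ψ.map_adj (f.2 i j hi hj hij)⟩ with hF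
    have hFrel : ∀ f g : homTree H G₁, homExt H G₁ f g → homExt H G₂ (F f) (F g) := by
      rintro f g ⟨hpre, hne⟩
      refine ⟨hpre.map ψ, ?_⟩
      intro heq
      apply hne
      have hlen₂ : g.1.length = f.1.length := by
        have := congrArg List.length heq
        simpa [hF] using this
      exact hpre.eq_of_length hlen₂
    have hFnil : F (homTree.nil H G₁) = homTree.nil H G₂ :=
      Subtype.ext (by simp [hF, homTree.nil])
    have key := acc_rank_le_of_relHom F hFrel (homTree.nil H G₁)
      (wf₁.apply (homTree.nil H G₁)) (wf₂.apply (F (homTree.nil H G₁)))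
    rw [hFnil] at key
    exact key
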